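/- Let X be a finite partially ordered set and n a natural number. Let Π_n(X) denote the set of monotone (n+1)-tuples x̄ = (x_0,…,x_n) of elements of X with x_0 ≤ x_1 ≤ ⋯ ≤ x_n, partially ordered componentwise: x̄ ⪯ ȳ if and only if x_i ≤ y_i for all i. Then the Möbius function μ_Π of the poset (Π_n(X), ⪯) is given by μ_Π(x̄,ȳ) = ∏_{i=0}^n μ_X(x_i,y_i) if x_0 ≤ y_0 ≤ x_1 ≤ y_1 ≤ ⋯ ≤ x_n ≤ y_n, and μ_Π(x̄,ȳ) = 0 otherwise, where μ_X is the Möbius function of X. -/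

import Mathlib

/-- the Möbius function of the poset `Π_n(X)` of monotone
`(n+1)`-tuples in a finite poset `X`, ordered componentwise, is given by
`μ_Π(x̄,ȳ) = ∏ᵢ μ_X(xᵢ,yᵢ)` if `x₀ ≤ y₀ ≤ x₁ ≤ y₁ ≤ ⋯ ≤ xₙ ≤ yₙ`, and `0`
otherwise.  (The Möbius functions are characterized by their defining
recurrences, taken here as hypotheses.) -/
theorem moebius_of_tuple_poset {n : ℕ} {X : Type*} [PartialOrder X] [Fintype X]
    (μX : X → X → ℤ)
    (hμX1 : ∀ x, μX x x = 1)
    (hμX2 : ∀ x y : X, ¬x ≤ y → μX x y = 0)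
    (hμX3 : ∀ x y : X, x < y → (∑ᶠ t ∈ {t : X | x ≤ t ∧ t ≤ y}, μX x t) = 0)
    (μP : {x : Fin (n + 1) → X // Monotone x} →
      {x : Fin (n + 1) → X // Monotone x} → ℤ)
    (hμP1 : ∀ x, μP x x = 1)
    (hμP2 : ∀ x y, ¬(∀ i, x.1 i ≤ y.1 i) → μP x y = 0)
    (hμP3 : ∀ x y, (∀ i, x.1 i ≤ y.1 i) → x ≠ y →
      (∑ᶠ t ∈ {t : {x : Fin (n + 1) → X // Monotone x} |
          (∀ i, x.1 i ≤ t.1 i) ∧ ∀ i, t.1 i ≤ y.1 i}, μP x t) = 0) :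
    ∀ x y : {x : Fin (n + 1) → X // Monotone x},
      (((∀ i, x.1 i ≤ y.1 i) ∧ ∀ i : Fin n, y.1 i.castSucc ≤ x.1 i.succ) →
        μP x y = ∏ i, μX (x.1 i) (y.1 i)) ∧
      (¬((∀ i, x.1 i ≤ y.1 i) ∧ ∀ i : Fin n, y.1 i.castSucc ≤ x.1 i.succ) →
        μP x y = 0) := by
  classical
  set ν : {x : Fin (n + 1) → X // Monotone x} → {x : Fin (n + 1) → X // Monotone x} → ℤ :=
    fun x y =>
      if (∀ i, x.1 i ≤ y.1 i) ∧ ∀ i : Fin n, y.1 i.castSucc ≤ x.1 i.succ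
      then ∏ i, μX (x.1 i) (y.1 i) else 0 with hν
  -- interval sums in X vanish on nontrivial intervals
  have hA : ∀ x z : X, x < z →
      (∑ s ∈ Finset.univ.filter (fun s => x ≤ s ∧ s ≤ z), μX x s) = 0 := by
    intro x z hxz
    have h := hμX3 x z hxz
    rwa [show {t : X | x ≤ t ∧ t ≤ z}
        = ↑(Finset.univ.filter (fun s => x ≤ s ∧ s ≤ z)) by ext s; simp,
      finsum_mem_coe_finset] at h
  have hν1 : ∀ x, ν x x = 1 := by
    intro x
    rw [hν]
    simp only
    rw [if_pos ⟨fun i => le_refl _, fun i => x.2 (Fin.castSucc_lt_succ : i.castSucc < i.succ).le⟩]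
    simp [hμX1]
  -- the interval finset in the tuple poset
  set T : {x : Fin (n + 1) → X // Monotone x} → {x : Fin (n + 1) → X // Monotone x} →
      Finset {x : Fin (n + 1) → X // Monotone x} :=
    fun x y => Finset.univ.filter (fun t => (∀ i, x.1 i ≤ t.1 i) ∧ ∀ i, t.1 i ≤ y.1 i) with hT
  -- ν satisfies the Möbius recurrence
  have hB : ∀ x y, (∀ i, x.1 i ≤ y.1 i) → x ≠ y → (∑ t ∈ T x y, ν x t) = 0 := by
    intro x y hxy hne
    set D : Fin (n + 1) → Finset X := fun i =>
      Finset.univ.filter (fun s => x.1 i ≤ s ∧ s ≤ y.1 i ∧ ∀ j, i < j → s ≤ x.1 j) with hD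
    have key : (∑ t ∈ T x y, ν x t)
        = ∑ p ∈ Fintype.piFinset D, ∏ i, μX (x.1 i) (p i) := by
      have step1 : (∑ t ∈ T x y, ν x t)
          = ∑ t ∈ (T x y).filter (fun t => ∀ i : Fin n, t.1 i.castSucc ≤ x.1 i.succ),
              ∏ i, μX (x.1 i) (t.1 i) := by
        conv_rhs => rw [Finset.sum_filter]
        apply Finset.sum_congr rfl
        intro t ht
        rw [hT] at ht
        simp only [Finset.mem_filter, Finset.mem_univ, true_and] at ht
        rw [hν]
        simp only
        by_cases hc : ∀ i : Fin n, t.1 i.castSucc ≤ x.1 i.succ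
        · rw [if_pos ⟨ht.1, hc⟩, if_pos hc]
        · rw [if_neg (by tauto), if_neg hc]
      rw [step1]
      apply Finset.sum_bij (fun t _ => t.1)
      · -- membership
        intro t ht
        simp only [hT, Finset.mem_filter, Finset.mem_univ, true_and] at ht
        obtain ⟨⟨h1, h2⟩, h3⟩ := ht
        rw [Fintype.mem_piFinset]
        intro i
        simp only [hD, Finset.mem_filter, Finset.mem_univ, true_and]
        refine ⟨h1 i, h2 i, ?_⟩
        intro j hij
        have hi : (i : ℕ) < n := lt_of_lt_of_le hij (Nat.lt_succ_iff.mp j.isLt)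
        set k : Fin n := ⟨i, hi⟩ with hk
        have hik : i = k.castSucc := by ext; simp [hk]
        have hkj : k.succ ≤ j := by
          rw [Fin.le_def]; simpa [hk] using hij
        calc t.1 i = t.1 k.castSucc := by rw [hik]
          _ ≤ x.1 k.succ := h3 k
          _ ≤ x.1 j := x.2 hkj
      · -- injective
        intro a ha b hb hab
        exact Subtype.ext hab
      · -- surjective
        intro p hp
        rw [Fintype.mem_piFinset] at hp
        have hp' : ∀ i, x.1 i ≤ p i ∧ p i ≤ y.1 i ∧ ∀ j, i < j → p i ≤ x.1 j := by
          intro i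
          have := hp i
          simpa only [hD, Finset.mem_filter, Finset.mem_univ, true_and] using this
        have hmono : Monotone p := by
          intro i j hij
          rcases lt_or_eq_of_le hij with h | h
          · exact ((hp' i).2.2 j h).trans (hp' j).1
          · rw [h]
        refine ⟨⟨p, hmono⟩, ?_, rfl⟩
        simp only [hT, Finset.mem_filter, Finset.mem_univ, true_and]
        refine ⟨⟨fun i => (hp' i).1, fun i => (hp' i).2.1⟩, ?_⟩
        intro i
        exact (hp' i.castSucc).2.2 i.succ (Fin.castSucc_lt_succ : i.castSucc < i.succ)
      · intro t ht
        rfl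
    rw [key, ← Finset.prod_univ_sum]
    -- find the largest coordinate where x and y differ
    have hFne : (Finset.univ.filter (fun i => x.1 i ≠ y.1 i)).Nonempty := by
      rw [Finset.filter_nonempty_iff]
      by_contra h
      push_neg at h
      exact hne (Subtype.ext (funext fun i => h i (Finset.mem_univ i)))
    set j := (Finset.univ.filter (fun i => x.1 i ≠ y.1 i)).max' hFne with hjdef
    have hj : x.1 j ≠ y.1 j :=
      (Finset.mem_filter.mp (Finset.max'_mem _ hFne)).2
    have hjk : ∀ k, j < k → x.1 k = y.1 k := by
      intro k hk
      by_contra h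
      exact absurd (Finset.le_max' _ k (by simp [h])) (not_le.mpr hk)
    apply Finset.prod_eq_zero (Finset.mem_univ j)
    have hDj : D j = Finset.univ.filter (fun s => x.1 j ≤ s ∧ s ≤ y.1 j) := by
      ext s
      simp only [hD, Finset.mem_filter, Finset.mem_univ, true_and]
      constructor
      · rintro ⟨h1, h2, _⟩; exact ⟨h1, h2⟩
      · rintro ⟨h1, h2⟩
        refine ⟨h1, h2, ?_⟩
        intro k hk
        calc s ≤ y.1 j := h2
          _ ≤ y.1 k := y.2 hk.le
          _ = x.1 k := (hjk k hk).symm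
    rw [hDj]
    exact hA (x.1 j) (y.1 j) (lt_of_le_of_ne (hxy j) hj)
  -- uniqueness: μP = ν, by induction on the size of the interval
  have hC : ∀ m : ℕ, ∀ x y, (T x y).card ≤ m → μP x y = ν x y := by
    intro m
    induction m with
    | zero =>
      intro x y hcard
      by_cases hxy : ∀ i, x.1 i ≤ y.1 i
      · exfalso
        have hx : x ∈ T x y := by
          simp only [hT, Finset.mem_filter, Finset.mem_univ, true_and]
          exact ⟨fun i => le_refl _, hxy⟩
        rw [Nat.le_zero, Finset.card_eq_zero] at hcard
        rw [hcard] at hx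
        exact absurd hx (Finset.notMem_empty x)
      · rw [hμP2 x y hxy, hν]
        simp only
        rw [if_neg (by tauto)]
    | succ m ih =>
      intro x y hcard
      by_cases hxy : ∀ i, x.1 i ≤ y.1 i
      · by_cases hxyeq : x = y
        · subst hxyeq
          rw [hμP1, hν1]
        · have hy : y ∈ T x y := by
            simp only [hT, Finset.mem_filter, Finset.mem_univ, true_and]
            exact ⟨hxy, fun i => le_refl _⟩
          have hsum : (∑ t ∈ T x y, μP x t) = 0 := by
            have h := hμP3 x y hxy hxyeq
            rwa [show {t : {x : Fin (n + 1) → X // Monotone x} |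
                (∀ i, x.1 i ≤ t.1 i) ∧ ∀ i, t.1 i ≤ y.1 i} = ↑(T x y) by
                  ext t; simp [hT], finsum_mem_coe_finset] at h
          have e1 : μP x y + ∑ t ∈ (T x y).erase y, μP x t = 0 := by
            rw [Finset.add_sum_erase _ _ hy]; exact hsum
          have e2 : ν x y + ∑ t ∈ (T x y).erase y, ν x t = 0 := by
            rw [Finset.add_sum_erase _ _ hy]; exact hB x y hxy hxyeq
          have e3 : (∑ t ∈ (T x y).erase y, μP x t) = ∑ t ∈ (T x y).erase y, ν x t := by
            apply Finset.sum_congr rfl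
            intro t ht
            rw [Finset.mem_erase] at ht
            obtain ⟨htny, htmem⟩ := ht
            simp only [hT, Finset.mem_filter, Finset.mem_univ, true_and] at htmem
            apply ih
            have hsub : T x t ⊆ T x y := by
              intro s hs
              simp only [hT, Finset.mem_filter, Finset.mem_univ, true_and] at hs ⊢
              exact ⟨hs.1, fun i => (hs.2 i).trans (htmem.2 i)⟩
            have hynot : y ∉ T x t := by
              simp only [hT, Finset.mem_filter, Finset.mem_univ, true_and]
              rintro ⟨-, h2⟩
              exact htny (Subtype.ext (funext fun i => le_antisymm (htmem.2 i) (h2 i)))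
            have hlt : (T x t).card < (T x y).card :=
              Finset.card_lt_card ((Finset.ssubset_iff_of_subset hsub).mpr ⟨y, hy, hynot⟩)
            omega
          linarith
      · rw [hμP2 x y hxy, hν]
        simp only
        rw [if_neg (by tauto)]
  have hall : ∀ x y, μP x y = ν x y := fun x y => hC (T x y).card x y le_rfl
  intro x y
  constructor
  · intro hcond
    rw [hall x y, hν]
    simp only
    rw [if_pos hcond]
  · intro hcond
    rw [hall x y, hν]
    simp only
    rw [if_neg hcond]
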